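/- Let T₁, T₂, T₃, g, η be as in the Kenmotsu example, and set ξ = T₃. Define the Lie derivative of g along ξ on vector fields X, Y by (L_ξ g)(X, Y)(x) = ξ·(g(X,Y))(x) − gₓ([ξ, X](x), Y(x)) − gₓ(X(x), [ξ, Y](x)). Then for all i, j ∈ {1, 2, 3} and every x with x₃ ≠ 0: (L_ξ g)(T_i, T_j)(x) = 2·[gₓ(T_i(x), T_j(x)) − ηₓ(T_i(x))·ηₓ(T_j(x))]. (This verifies on the orthonormal frame the Kenmotsu identity (L_ξ g)(X, Y) = 2[g(X, Y) − η(X)η(Y)].) -/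

import Mathlib

open scoped BigOperators

noncomputable section

/-- Points/vectors of ℝ³. -/
abbrev V3 := Fin 3 → ℝ

/-- T₁(x) = x₃·e₁ -/
def T1 (x : V3) : V3 := ![x 2, 0, 0]

/-- T₂(x) = x₃·e₂ -/
def T2 (x : V3) : V3 := ![0, x 2, 0]

/-- T₃(x) = −x₃·e₃ -/
def T3 (x : V3) : V3 := ![0, 0, -(x 2)]

/-- The frame (T₁, T₂, T₃). -/
def T : Fin 3 → (V3 → V3) := ![T1, T2, T3]

/-- Lie bracket [X,Y](x) = (DY)ₓ(X(x)) − (DX)ₓ(Y(x)). -/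
noncomputable def lieBracket (X Y : V3 → V3) (x : V3) : V3 :=
  fderiv ℝ Y x (X x) - fderiv ℝ X x (Y x)

/-- The metric gₓ(u,v) = x₃⁻²·⟨u,v⟩ (Euclidean inner product). -/
noncomputable def gmet (x u v : V3) : ℝ := ((x 2) ^ 2)⁻¹ * ∑ i, u i * v i

/-- The 1-form ηₓ(v) = −v₃/x₃. -/
noncomputable def eta (x v : V3) : ℝ := -(v 2) / x 2

/-- The structure tensor φ: φ(e₁) = −e₂, φ(e₂) = e₁, φ(e₃) = 0. -/
def phi (v : V3) : V3 := ![v 1, -(v 0), 0]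

/-- Directional derivative X·f at x: (Df)ₓ(X(x)). -/
noncomputable def dirD (X : V3 → V3) (f : V3 → ℝ) (x : V3) : ℝ := fderiv ℝ f x (X x)

/-- The Koszul expression K(X,Y,Z). -/
noncomputable def koszul (X Y Z : V3 → V3) (x : V3) : ℝ :=
  dirD X (fun p => gmet p (Y p) (Z p)) x
    + dirD Y (fun p => gmet p (Z p) (X p)) x
    - dirD Z (fun p => gmet p (X p) (Y p)) x
    - gmet x (X x) (lieBracket Y Z x)
    - gmet x (Y x) (lieBracket X Z x)
    + gmet x (Z x) (lieBracket X Y x)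

/-- Lie derivative of g along a vector field W:
(L_W g)(X,Y)(x) = W·(g(X,Y))(x) − gₓ([W,X](x), Y(x)) − gₓ(X(x), [W,Y](x)). -/
noncomputable def lieDerivG (W X Y : V3 → V3) (x : V3) : ℝ :=
  dirD W (fun p => gmet p (X p) (Y p)) x
    - gmet x (lieBracket W X x) (Y x)
    - gmet x (X x) (lieBracket W Y x)

/-- The potential vector field V(x) = 2x₁·e₁ + 2x₂·e₂ + x₃·e₃. -/
def Vf (x : V3) : V3 := ![2 * x 0, 2 * x 1, x 2]

def Lc (e : V3) : V3 →L[ℝ] V3 :=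
  (ContinuousLinearMap.proj (R:=ℝ) (φ:=fun _ : Fin 3 => ℝ) 2).smulRight e

lemma fderiv_T1 (x : V3) : fderiv ℝ T1 x = Lc ![1,0,0] := by
  have h : T1 = fun x => Lc ![1,0,0] x := by
    funext x; simp [T1, Lc, ContinuousLinearMap.smulRight_apply]
  rw [h]; exact (Lc _).hasFDerivAt.fderiv

lemma fderiv_T2 (x : V3) : fderiv ℝ T2 x = Lc ![0,1,0] := by
  have h : T2 = fun x => Lc ![0,1,0] x := by
    funext x; simp [T2, Lc, ContinuousLinearMap.smulRight_apply]
  rw [h]; exact (Lc _).hasFDerivAt.fderiv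

lemma fderiv_T3 (x : V3) : fderiv ℝ T3 x = Lc ![0,0,-1] := by
  have h : T3 = fun x => Lc ![0,0,-1] x := by
    funext x; simp [T3, Lc, ContinuousLinearMap.smulRight_apply]
  rw [h]; exact (Lc _).hasFDerivAt.fderiv

lemma open_set : IsOpen {p : V3 | p 2 ≠ 0} :=
  isOpen_compl_singleton.preimage (continuous_apply 2)

lemma diag_dirD (x : V3) (hx : x 2 ≠ 0) (Z : V3 → V3)
    (hZ : ∀ p : V3, p 2 ≠ 0 → gmet p (Z p) (Z p) = 1) :
    fderiv ℝ (fun p => gmet p (Z p) (Z p)) x = 0 := by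
  have h : (fun p => gmet p (Z p) (Z p)) =ᶠ[nhds x] fun _ => (1:ℝ) :=
    Filter.eventuallyEq_of_mem (open_set.mem_nhds hx) hZ
  rw [h.fderiv_eq, fderiv_fun_const]; rfl


lemma fin3_mk0 (h) : (⟨0, h⟩ : Fin 3) = 0 := rfl
lemma fin3_mk1 (h) : (⟨1, h⟩ : Fin 3) = 1 := rfl
lemma fin3_mk2 (h) : (⟨2, h⟩ : Fin 3) = 2 := rfl


/-- (L_ξ g)(T_i, T_j) = 2·[g(T_i, T_j) − η(T_i)·η(T_j)] with ξ = T₃. -/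
theorem stmt_12 : ∀ i j : Fin 3, ∀ x : V3, x 2 ≠ 0 →
    lieDerivG T3 (T i) (T j) x
      = 2 * (gmet x (T i x) (T j x) - eta x (T i x) * eta x (T j x)) := by
  intro i j x hx
  have h11 := diag_dirD x hx T1 (fun p hp => by
    simp [gmet, T1, Fin.sum_univ_three]; field_simp)
  have h22 := diag_dirD x hx T2 (fun p hp => by
    simp [gmet, T2, Fin.sum_univ_three]; field_simp)
  have h33 := diag_dirD x hx T3 (fun p hp => by
    simp [gmet, T3, Fin.sum_univ_three]; field_simp)
  have z12 : (fun p : V3 => gmet p (T1 p) (T2 p)) = fun _ => (0:ℝ) := by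
    funext p; simp [gmet, T1, T2, Fin.sum_univ_three]
  have z13 : (fun p : V3 => gmet p (T1 p) (T3 p)) = fun _ => (0:ℝ) := by
    funext p; simp [gmet, T1, T3, Fin.sum_univ_three]
  have z21 : (fun p : V3 => gmet p (T2 p) (T1 p)) = fun _ => (0:ℝ) := by
    funext p; simp [gmet, T1, T2, Fin.sum_univ_three]
  have z23 : (fun p : V3 => gmet p (T2 p) (T3 p)) = fun _ => (0:ℝ) := by
    funext p; simp [gmet, T2, T3, Fin.sum_univ_three]
  have z31 : (fun p : V3 => gmet p (T3 p) (T1 p)) = fun _ => (0:ℝ) := by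
    funext p; simp [gmet, T1, T3, Fin.sum_univ_three]
  have z32 : (fun p : V3 => gmet p (T3 p) (T2 p)) = fun _ => (0:ℝ) := by
    funext p; simp [gmet, T2, T3, Fin.sum_univ_three]
  fin_cases i <;> fin_cases j <;>
    simp only [fin3_mk0, fin3_mk1, fin3_mk2, T, Fin.isValue, Matrix.cons_val_zero, Matrix.cons_val_one,
      Matrix.head_cons, Matrix.cons_val_two, Matrix.tail_cons] <;>
    simp only [lieDerivG, dirD, lieBracket, h11, h22, h33, z12, z13, z21, z23, z31, z32,
      fderiv_T1, fderiv_T2, fderiv_T3, fderiv_fun_const, Pi.zero_apply,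
      ContinuousLinearMap.zero_apply] <;>
    simp [Lc, ContinuousLinearMap.smulRight_apply, gmet, eta, T1, T2, T3,
      Fin.sum_univ_three] <;>
    field_simp <;> ring
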